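/- arXiv:2010.16077 — 5 statements merged into one kernel-verified Lean document; each statement's English description precedes it below -/
import Mathlib

section
/- If z₁ and z₂ are complex numbers with |z₁| ≤ 1 and |z₂| ≤ 1, then the pair (s, p) = (z₁ + z₂, z₁z₂) satisfies |s| ≤ 2 and |s − conj(s)·p| ≤ 1 − |p|². -/
/-- Agler–Young conditions for the closed symmetrized bidisc. -/
theorem stmt3 (z₁ z₂ : ℂ) (h₁ : ‖z₁‖ ≤ 1) (h₂ : ‖z₂‖ ≤ 1) :
    ‖z₁ + z₂‖ ≤ 2 ∧
    ‖(z₁ + z₂) - (starRingEnd ℂ) (z₁ + z₂) * (z₁ * z₂)‖ ≤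
      1 - ‖z₁ * z₂‖ ^ 2 := by
  constructor
  · calc ‖z₁ + z₂‖ ≤ ‖z₁‖ + ‖z₂‖ := norm_add_le _ _
    _ ≤ 2 := by linarith
  · have heq : (z₁ + z₂) - (starRingEnd ℂ) (z₁ + z₂) * (z₁ * z₂)
        = z₁ * (1 - z₂ * (starRingEnd ℂ) z₂) + z₂ * (1 - z₁ * (starRingEnd ℂ) z₁) := by
      simp [map_add]; ring
    have h2 : z₂ * (starRingEnd ℂ) z₂ = (Complex.normSq z₂ : ℂ) := Complex.mul_conj z₂
    have h1 : z₁ * (starRingEnd ℂ) z₁ = (Complex.normSq z₁ : ℂ) := Complex.mul_conj z₁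
    have n1 : Complex.normSq z₁ = ‖z₁‖ ^ 2 := (Complex.sq_norm z₁).symm
    have n2 : Complex.normSq z₂ = ‖z₂‖ ^ 2 := (Complex.sq_norm z₂).symm
    have a1 : (0:ℝ) ≤ ‖z₁‖ := norm_nonneg _
    have a2 : (0:ℝ) ≤ ‖z₂‖ := norm_nonneg _
    have e2 : ‖1 - z₂ * (starRingEnd ℂ) z₂‖ = 1 - ‖z₂‖ ^ 2 := by
      rw [h2]
      have : (1 : ℂ) - (Complex.normSq z₂ : ℂ) = ((1 - Complex.normSq z₂ : ℝ) : ℂ) := by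
        push_cast; ring
      rw [this, Complex.norm_real, Real.norm_eq_abs, abs_of_nonneg (by nlinarith)]
      rw [n2]
    have e1 : ‖1 - z₁ * (starRingEnd ℂ) z₁‖ = 1 - ‖z₁‖ ^ 2 := by
      rw [h1]
      have : (1 : ℂ) - (Complex.normSq z₁ : ℂ) = ((1 - Complex.normSq z₁ : ℝ) : ℂ) := by
        push_cast; ring
      rw [this, Complex.norm_real, Real.norm_eq_abs, abs_of_nonneg (by nlinarith)]
      rw [n1]
    rw [heq, norm_mul]
    calc ‖z₁ * (1 - z₂ * (starRingEnd ℂ) z₂) + z₂ * (1 - z₁ * (starRingEnd ℂ) z₁)‖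
        ≤ ‖z₁‖ * (1 - ‖z₂‖ ^ 2) + ‖z₂‖ * (1 - ‖z₁‖ ^ 2) := by
          calc _ ≤ ‖z₁ * (1 - z₂ * (starRingEnd ℂ) z₂)‖ +
                ‖z₂ * (1 - z₁ * (starRingEnd ℂ) z₁)‖ := norm_add_le _ _
          _ = _ := by rw [norm_mul, norm_mul, e1, e2]
      _ ≤ 1 - (‖z₁‖ * ‖z₂‖) ^ 2 := by nlinarith [mul_nonneg (mul_nonneg (by linarith : (0:ℝ) ≤ 1 - ‖z₁‖) (by linarith : (0:ℝ) ≤ 1 - ‖z₂‖)) (by nlinarith : (0:ℝ) ≤ 1 - ‖z₁‖ * ‖z₂‖)]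
end

section
/- If z₁ and z₂ are complex numbers with |z₁| < 1 and |z₂| < 1, then (s, p) = (z₁ + z₂, z₁z₂) satisfies |s − conj(s)·p| < 1 − |p|². -/
/-- Open Agler–Young inequality for the open symmetrized bidisc. -/
theorem stmt4 (z₁ z₂ : ℂ) (h₁ : ‖z₁‖ < 1) (h₂ : ‖z₂‖ < 1) :
    ‖(z₁ + z₂) - (starRingEnd ℂ) (z₁ + z₂) * (z₁ * z₂)‖ <
      1 - ‖z₁ * z₂‖ ^ 2 := by
  set a := ‖z₁‖ with ha
  set b := ‖z₂‖ with hb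
  have ha0 : 0 ≤ a := norm_nonneg _
  have hb0 : 0 ≤ b := norm_nonneg _
  have key : (z₁ + z₂) - (starRingEnd ℂ) (z₁ + z₂) * (z₁ * z₂)
      = z₁ * (1 - (starRingEnd ℂ) z₂ * z₂) + z₂ * (1 - (starRingEnd ℂ) z₁ * z₁) := by
    rw [map_add]; ring
  have h1 : (starRingEnd ℂ) z₂ * z₂ = (b ^ 2 : ℝ) := by
    rw [mul_comm, Complex.mul_conj, hb, Complex.sq_norm]
  have h2 : (starRingEnd ℂ) z₁ * z₁ = (a ^ 2 : ℝ) := by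
    rw [mul_comm, Complex.mul_conj, ha, Complex.sq_norm]
  have habs1 : ‖1 - (starRingEnd ℂ) z₂ * z₂‖ = 1 - b ^ 2 := by
    rw [h1]
    rw [show (1 : ℂ) - (b ^ 2 : ℝ) = ((1 - b ^ 2 : ℝ) : ℂ) by push_cast; ring]
    rw [Complex.norm_real, Real.norm_eq_abs, abs_of_nonneg (by nlinarith)]
  have habs2 : ‖1 - (starRingEnd ℂ) z₁ * z₁‖ = 1 - a ^ 2 := by
    rw [h2]
    rw [show (1 : ℂ) - (a ^ 2 : ℝ) = ((1 - a ^ 2 : ℝ) : ℂ) by push_cast; ring]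
    rw [Complex.norm_real, Real.norm_eq_abs, abs_of_nonneg (by nlinarith)]
  calc ‖(z₁ + z₂) - (starRingEnd ℂ) (z₁ + z₂) * (z₁ * z₂)‖
      ≤ a * (1 - b ^ 2) + b * (1 - a ^ 2) := by
        rw [key]
        refine (norm_add_le _ _).trans ?_
        rw [norm_mul, norm_mul, habs1, habs2]
    _ < 1 - ‖z₁ * z₂‖ ^ 2 := by
        rw [norm_mul]
        have hab : a * b < 1 := by nlinarith
        nlinarith [mul_pos (mul_pos (sub_pos.2 h₁) (sub_pos.2 h₂)) (sub_pos.2 hab)]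
end

section
/- Let s₁, s₂, p, c₁, c₂ be complex numbers with |p| ≤ 1, |c₁| + |c₂| ≤ 3, s₁ = c₁ + conj(c₂)·p and s₂ = c₂ + conj(c₁)·p. Then for every ω on the unit circle, setting s_ω = (s₁ + ω s₂)/3 and p_ω = ω p, one has |s_ω − conj(s_ω)·p_ω| ≤ 1 − |p_ω|². -/
/-- The key inequality showing `(s₁,s₂,p) ↦ (s₁/3 + ωs₂/3, ωp)` maps `Γ₃` into `Γ₂`. -/
theorem stmt5 (s₁ s₂ p c₁ c₂ ω : ℂ)
    (hp : ‖p‖ ≤ 1) (hc : ‖c₁‖ + ‖c₂‖ ≤ 3)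
    (hs₁ : s₁ = c₁ + (starRingEnd ℂ) c₂ * p) (hs₂ : s₂ = c₂ + (starRingEnd ℂ) c₁ * p)
    (hω : ‖ω‖ = 1) :
    ‖(s₁ + ω * s₂) / 3 - (starRingEnd ℂ) ((s₁ + ω * s₂) / 3) * (ω * p)‖ ≤
      1 - ‖ω * p‖ ^ 2 := by
  have hω' : (starRingEnd ℂ) ω * ω = 1 := by
    rw [mul_comm, Complex.mul_conj, ← Complex.sq_norm, hω]; norm_num
  have hp' : (starRingEnd ℂ) p * p = ((‖p‖ : ℝ) : ℂ) ^ 2 := by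
    rw [mul_comm, Complex.mul_conj, ← Complex.sq_norm]; norm_num
  have key : (s₁ + ω * s₂) / 3 - (starRingEnd ℂ) ((s₁ + ω * s₂) / 3) * (ω * p)
      = (c₁ + ω * c₂) * (1 - ((‖p‖ : ℝ) : ℂ) ^ 2) / 3 := by
    subst hs₁ hs₂
    simp only [map_add, map_mul, map_div₀, Complex.conj_conj, map_ofNat]
    linear_combination (-(ω * c₂ + c₁) / 3) * hp' +
      (-((starRingEnd ℂ) c₂ + c₁ * (starRingEnd ℂ) p) * p / 3) * hω'
  rw [key]
  have habs : ‖(‖p‖ : ℂ)‖ = ‖p‖ := by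
    simp
  have h1 : ‖1 - ((‖p‖ : ℝ) : ℂ) ^ 2‖ = 1 - ‖p‖ ^ 2 := by
    rw [show (1 - ((‖p‖ : ℝ) : ℂ) ^ 2) = ((1 - ‖p‖ ^ 2 : ℝ) : ℂ) by
      push_cast; ring]
    rw [Complex.norm_real, Real.norm_eq_abs, abs_of_nonneg]
    nlinarith [norm_nonneg p]
  rw [norm_div, norm_mul, h1]
  have h2 : ‖c₁ + ω * c₂‖ ≤ 3 := by
    calc ‖c₁ + ω * c₂‖ ≤ ‖c₁‖ + ‖ω * c₂‖ :=
          norm_add_le _ _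
      _ = ‖c₁‖ + ‖c₂‖ := by rw [norm_mul, hω, one_mul]
      _ ≤ 3 := hc
  have h3 : ‖ω * p‖ ^ 2 = ‖p‖ ^ 2 := by
    rw [norm_mul, hω, one_mul]
  rw [h3]
  have h4 : (0:ℝ) ≤ 1 - ‖p‖ ^ 2 := by nlinarith [norm_nonneg p]
  have h5 : ‖(3 : ℂ)‖ = 3 := by simp
  rw [h5]
  nlinarith [norm_nonneg (c₁ + ω * c₂)]
end

section
/- The point (s₁, s₂, p) = (2, 5/2, 1/2) does not belong to the closed symmetrized tridisc Γ₃, yet for every unimodular ω the point (s₁/3 + ω s₂/3, ω p) satisfies the Agler–Young conditions |s| ≤ 2 and |s − conj(s)·p| ≤ 1 − |p|² for membership in Γ₂. -/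
/-- `(2, 5/2, 1/2) ∉ Γ₃`, yet `(2/3 + ω(5/2)/3, ω/2)` satisfies the Agler–Young
conditions for `Γ₂` for every unimodular `ω`. -/
theorem stmt7 :
    (¬ ∃ z₁ z₂ z₃ : ℂ, ‖z₁‖ ≤ 1 ∧ ‖z₂‖ ≤ 1 ∧ ‖z₃‖ ≤ 1 ∧
        (2 : ℂ) = z₁ + z₂ + z₃ ∧ (5 / 2 : ℂ) = z₁ * z₂ + z₂ * z₃ + z₃ * z₁ ∧
        (1 / 2 : ℂ) = z₁ * z₂ * z₃) ∧
    ∀ ω : ℂ, ‖ω‖ = 1 →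
      ‖(2 : ℂ) / 3 + ω * (5 / 2) / 3‖ ≤ 2 ∧
      ‖(((2 : ℂ) / 3 + ω * (5 / 2) / 3) -
          (starRingEnd ℂ) ((2 : ℂ) / 3 + ω * (5 / 2) / 3) * (ω * (1 / 2)))‖ ≤
        1 - ‖ω * (1 / 2)‖ ^ 2 := by
  constructor
  · rintro ⟨z₁, z₂, z₃, h1, h2, h3, hs, hq, -⟩
    have n1 : z₁.re ^ 2 + z₁.im ^ 2 ≤ 1 := by
      have := Complex.sq_norm z₁
      have h1' : ‖z₁‖ ^ 2 ≤ 1 := by nlinarith [norm_nonneg z₁]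
      rw [Complex.sq_norm, Complex.normSq_apply] at h1'; nlinarith
    have n2 : z₂.re ^ 2 + z₂.im ^ 2 ≤ 1 := by
      have h2' : ‖z₂‖ ^ 2 ≤ 1 := by nlinarith [norm_nonneg z₂]
      rw [Complex.sq_norm, Complex.normSq_apply] at h2'; nlinarith
    have n3 : z₃.re ^ 2 + z₃.im ^ 2 ≤ 1 := by
      have h3' : ‖z₃‖ ^ 2 ≤ 1 := by nlinarith [norm_nonneg z₃]
      rw [Complex.sq_norm, Complex.normSq_apply] at h3'; nlinarith
    have hsq : z₁ ^ 2 + z₂ ^ 2 + z₃ ^ 2 = -1 := by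
      have : z₁ ^ 2 + z₂ ^ 2 + z₃ ^ 2 =
          (z₁ + z₂ + z₃) ^ 2 - 2 * (z₁ * z₂ + z₂ * z₃ + z₃ * z₁) := by ring
      rw [this, ← hs, ← hq]; norm_num
    have hre : z₁.re + z₂.re + z₃.re = 2 := by
      have := congrArg Complex.re hs
      simpa using this.symm
    have hre2 : (z₁.re ^ 2 - z₁.im ^ 2) + (z₂.re ^ 2 - z₂.im ^ 2) +
        (z₃.re ^ 2 - z₃.im ^ 2) = -1 := by
      have := congrArg Complex.re hsq
      simpa [Complex.add_re, pow_two, Complex.mul_re] using this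
    nlinarith [sq_nonneg (z₁.re - z₂.re), sq_nonneg (z₂.re - z₃.re),
      sq_nonneg (z₁.re - z₃.re), sq_nonneg (z₁.re + z₂.re + z₃.re)]
  · intro ω hω
    have hc : (starRingEnd ℂ) ω * ω = 1 := by
      rw [mul_comm, Complex.mul_conj, Complex.normSq_eq_norm_sq, hω]
      norm_num
    have habs : ‖ω * (1 / 2)‖ = 1 / 2 := by
      rw [norm_mul, hω]; norm_num
    constructor
    · calc ‖(2 : ℂ) / 3 + ω * (5 / 2) / 3‖
          ≤ ‖(2 : ℂ) / 3‖ + ‖ω * (5 / 2) / 3‖ :=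
            norm_add_le _ _
        _ ≤ 2 := by norm_num [hω]
    · have key : ((2 : ℂ) / 3 + ω * (5 / 2) / 3) -
          (starRingEnd ℂ) ((2 : ℂ) / 3 + ω * (5 / 2) / 3) * (ω * (1 / 2)) =
          1 / 4 + ω / 2 := by
        simp only [map_add, map_mul, map_div₀, map_ofNat, map_one]
        linear_combination (-(5 : ℂ) / 12) * hc
      rw [key, habs]
      calc ‖(1 : ℂ) / 4 + ω / 2‖
          ≤ ‖(1 : ℂ) / 4‖ + ‖ω / 2‖ := norm_add_le _ _
        _ ≤ 1 - (1 / 2) ^ 2 := by rw [norm_div, norm_div, hω]; norm_num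
end

section
/- Let π₂ : ℂ² → ℂ² be the symmetrization map π₂(z₁, z₂) = (z₁ + z₂, z₁z₂). Then π₂ maps the torus 𝕋² onto the distinguished boundary bΓ₂ = {(s, p) : |p| = 1, s = conj(s)·p, |s| ≤ 2}, i.e., for (z₁, z₂) ∈ 𝕋² the image (s,p) = π₂(z₁,z₂) satisfies |p| = 1, s = conj(s)p and |s| ≤ 2, and conversely every (s,p) with these properties equals π₂(z₁,z₂) for some z₁, z₂ ∈ 𝕋. -/
/-- The symmetrization map `π₂` maps the torus `𝕋²` onto the distinguished boundary
`bΓ₂ = {(s,p) : |p| = 1, s = conj(s)·p, |s| ≤ 2}`. -/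
theorem stmt17 :
    (∀ z₁ z₂ : ℂ, ‖z₁‖ = 1 → ‖z₂‖ = 1 →
      ‖z₁ * z₂‖ = 1 ∧ z₁ + z₂ = (starRingEnd ℂ) (z₁ + z₂) * (z₁ * z₂) ∧
        ‖z₁ + z₂‖ ≤ 2) ∧
    ∀ s p : ℂ, ‖p‖ = 1 → s = (starRingEnd ℂ) s * p → ‖s‖ ≤ 2 →
      ∃ z₁ z₂ : ℂ, ‖z₁‖ = 1 ∧ ‖z₂‖ = 1 ∧ s = z₁ + z₂ ∧ p = z₁ * z₂ := by
  constructor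
  · intro z₁ z₂ h₁ h₂
    have n₁ : (starRingEnd ℂ) z₁ * z₁ = 1 := by
      rw [← Complex.normSq_eq_conj_mul_self]
      norm_cast
      rw [← Complex.sq_norm, h₁]; norm_num
    have n₂ : (starRingEnd ℂ) z₂ * z₂ = 1 := by
      rw [← Complex.normSq_eq_conj_mul_self]
      norm_cast
      rw [← Complex.sq_norm, h₂]; norm_num
    refine ⟨by rw [norm_mul, h₁, h₂]; ring, ?_, ?_⟩
    · rw [map_add]
      calc z₁ + z₂ = ((starRingEnd ℂ) z₁ * z₁) * z₂ + ((starRingEnd ℂ) z₂ * z₂) * z₁ := by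
            rw [n₁, n₂]; ring
        _ = ((starRingEnd ℂ) z₁ + (starRingEnd ℂ) z₂) * (z₁ * z₂) := by ring
    · calc ‖z₁ + z₂‖ ≤ ‖z₁‖ + ‖z₂‖ := norm_add_le _ _
        _ = 2 := by rw [h₁, h₂]; norm_num
  · intro s p hp hsp hs
    have hp0 : p ≠ 0 := by
      intro h; rw [h] at hp; simp at hp
    obtain ⟨ω, hω⟩ : ∃ ω : ℂ, ω ^ 2 = p := ⟨p ^ ((1 : ℂ)/2), by
      have h2 := Complex.cpow_nat_inv_pow p (two_ne_zero)
      norm_num at h2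
      exact_mod_cast h2⟩
    have habsω : ‖ω‖ = 1 := by
      have : ‖ω‖ ^ 2 = 1 := by rw [← norm_pow, hω, hp]
      nlinarith [norm_nonneg ω]
    have hωconj : (starRingEnd ℂ) ω * ω = 1 := by
      rw [← Complex.normSq_eq_conj_mul_self]
      norm_cast
      rw [← Complex.sq_norm, habsω]; norm_num
    set t : ℂ := s * (starRingEnd ℂ) ω with ht
    have key : ω * (starRingEnd ℂ) ω = 1 := by rw [mul_comm]; exact hωconj
    have ht2 : t = (starRingEnd ℂ) s * ω := by
      rw [ht]
      calc s * (starRingEnd ℂ) ω = (starRingEnd ℂ) s * ω ^ 2 * (starRingEnd ℂ) ω := by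
            rw [hω, ← hsp]
        _ = (starRingEnd ℂ) s * ω * (ω * (starRingEnd ℂ) ω) := by ring
        _ = (starRingEnd ℂ) s * ω := by rw [key, mul_one]
    have htreal : (starRingEnd ℂ) t = t := by
      rw [ht2, map_mul, Complex.conj_conj, ← ht2, ht]
    have htr : t = (t.re : ℂ) := (Complex.conj_eq_iff_re.mp htreal).symm
    set r : ℝ := t.re with hr
    have hst : s = r * ω := by
      rw [← htr, ht]
      calc s = s * ((starRingEnd ℂ) ω * ω) := by rw [hωconj]; ring
        _ = s * (starRingEnd ℂ) ω * ω := by ring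
    have habst : |r| ≤ 2 := by
      have : ‖t‖ = ‖s‖ := by
        rw [ht, norm_mul, Complex.norm_conj, habsω, mul_one]
      rw [← Real.norm_eq_abs, ← Complex.norm_real, ← htr, this]; exact hs
    set c : ℝ := r / 2 with hc
    have hc2 : 1 - c ^ 2 ≥ 0 := by
      have : c ^ 2 ≤ 1 := by
        rw [hc]
        nlinarith [abs_nonneg r, sq_abs r, neg_abs_le r, le_abs_self r]
      linarith
    set d : ℝ := Real.sqrt (1 - c ^ 2) with hd
    have hd2 : d ^ 2 = 1 - c ^ 2 := Real.sq_sqrt hc2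
    set u : ℂ := (c : ℂ) + (d : ℂ) * Complex.I with hu
    have hnormu : Complex.normSq u = 1 := by
      rw [hu, Complex.normSq_add_mul_I]
      rw [hd2]; ring
    have habsu : ‖u‖ = 1 := by
      rw [Complex.norm_def, hnormu, Real.sqrt_one]
    refine ⟨ω * u, ω * (starRingEnd ℂ) u, ?_, ?_, ?_, ?_⟩
    · rw [norm_mul, habsω, habsu]; norm_num
    · rw [norm_mul, habsω, Complex.norm_conj, habsu]; norm_num
    · have hconju : (starRingEnd ℂ) u = (c : ℂ) - (d : ℂ) * Complex.I := by
        rw [hu]; simp [Complex.ext_iff]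
      rw [hst, hu, hconju]
      push_cast [hc]
      ring
    · have : u * (starRingEnd ℂ) u = (Complex.normSq u : ℂ) := by
        rw [Complex.mul_conj]
      calc p = ω ^ 2 * (Complex.normSq u : ℂ) := by rw [hnormu, hω]; norm_num
        _ = ω * u * (ω * (starRingEnd ℂ) u) := by rw [← this]; ring
end
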